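/- Suppose g(x) = ∫_0^∞ (2π)^{-d/2} ξ^{-d/2} exp(-||x||²/(2ξ)) K ξ^{-r} L(ξ) dξ for x ∈ ℝ^d, where K > 0, r > 1, and 0 ≤ L(ξ) ≤ C for all ξ > 0 with C ≥ 1. Then for all x ≠ 0, g(x) ≤ C K 2^{r-1} π^{-d/2} Γ(d/2 + r - 1) ||x||^{-(d + 2r - 2)}. -/

import Mathlib

open MeasureTheory Real

set_option maxHeartbeats 800000 in
open Set in
lemma aux_f_integrable {a s : ℝ} (ha : 0 < a) (hs : 0 < s) :
    IntegrableOn (fun y : ℝ => y ^ (s - 1) * Real.exp (-(a * y))) (Ioi 0) := by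
  have h0 : IntegrableOn (fun u : ℝ => Real.exp (-u) * u ^ (s - 1)) (Ioi (a * 0)) := by
    rw [mul_zero]; exact Real.GammaIntegral_convergent hs
  have h : IntegrableOn (fun y : ℝ => Real.exp (-(a * y)) * (a * y) ^ (s - 1)) (Ioi 0) :=
    (integrableOn_Ioi_comp_mul_left_iff (fun u : ℝ => Real.exp (-u) * u ^ (s - 1)) 0 ha).mpr h0
  have h2 : IntegrableOn (fun y : ℝ =>
      a ^ (1 - s) * (Real.exp (-(a * y)) * (a * y) ^ (s - 1))) (Ioi 0) := by
    exact Integrable.const_mul h _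
  refine h2.congr_fun (fun y hy => ?_) measurableSet_Ioi
  have hy0 : (0:ℝ) < y := hy
  beta_reduce
  rw [Real.mul_rpow ha.le hy0.le]
  have h1 : a ^ (1 - s) * a ^ (s - 1) = 1 := by
    rw [← Real.rpow_add ha]; norm_num
  linear_combination (Real.exp (-(a * y)) * y ^ (s - 1)) * h1

open Set in
lemma aux_key {a s : ℝ} (ha : 0 < a) (hs : 0 < s) :
    IntegrableOn (fun ξ : ℝ => ξ ^ (-(s + 1)) * Real.exp (-(a / ξ))) (Ioi 0) ∧
    (∫ ξ in Ioi (0:ℝ), ξ ^ (-(s + 1)) * Real.exp (-(a / ξ)))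
      = a ^ (-s) * Real.Gamma s := by
  set f : ℝ → ℝ := fun y => y ^ (s - 1) * Real.exp (-(a * y)) with hf
  have hfi := aux_f_integrable ha hs
  have heq : ∀ ξ ∈ Ioi (0:ℝ),
      (|(-1:ℝ)| * ξ ^ ((-1:ℝ) - 1)) • f (ξ ^ (-1:ℝ))
        = ξ ^ (-(s + 1)) * Real.exp (-(a / ξ)) := by
    intro ξ hξ
    have hξ0 : (0:ℝ) < ξ := hξ
    rw [smul_eq_mul, hf]
    dsimp only
    rw [Real.rpow_neg_one, Real.inv_rpow hξ0.le, ← Real.rpow_neg hξ0.le]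
    rw [abs_neg, abs_one, one_mul]
    rw [show (-1:ℝ) - 1 = -2 by norm_num, mul_comm a ξ⁻¹, ← div_eq_inv_mul,
      ← mul_assoc, ← Real.rpow_add hξ0]
    norm_num
    ring_nf
  constructor
  · have := (integrableOn_Ioi_comp_rpow_iff f (p := -1) (by norm_num)).mpr hfi
    exact (this.congr_fun heq measurableSet_Ioi)
  · have := integral_comp_rpow_Ioi f (p := -1) (by norm_num)
    rw [← setIntegral_congr_fun measurableSet_Ioi heq, this, hf]
    have := Real.integral_rpow_mul_exp_neg_mul_Ioi hs ha
    rw [this, one_div, Real.inv_rpow ha.le, ← Real.rpow_neg ha.le]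


/-- Upper bound for a Gaussian scale mixture with polynomial-tailed mixing density:
if `g(x) = ∫_0^∞ (2π)^{-d/2} ξ^{-d/2} exp(-‖x‖²/(2ξ)) K ξ^{-r} L(ξ) dξ` with `K > 0`,
`r > 1` and `0 ≤ L(ξ) ≤ C` for all `ξ > 0` (`C ≥ 1`), then for all `x ≠ 0`,
`g(x) ≤ C K 2^{r-1} π^{-d/2} Γ(d/2+r-1) ‖x‖^{-(d+2r-2)}`. -/
theorem gaussian_scale_mixture_upper (d : ℕ) (K r C : ℝ) (L : ℝ → ℝ)
    (hK : 0 < K) (hr : 1 < r) (hC : 1 ≤ C)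
    (hL : ∀ ξ : ℝ, 0 < ξ → 0 ≤ L ξ ∧ L ξ ≤ C)
    (x : EuclideanSpace ℝ (Fin d)) (hx : x ≠ 0) :
    (∫ ξ in Set.Ioi (0:ℝ),
        (2 * Real.pi) ^ (-(d : ℝ) / 2) * ξ ^ (-(d : ℝ) / 2) *
          Real.exp (-‖x‖ ^ 2 / (2 * ξ)) * (K * ξ ^ (-r) * L ξ)) ≤
      C * K * 2 ^ (r - 1) * Real.pi ^ (-(d : ℝ) / 2) *
        Real.Gamma ((d : ℝ) / 2 + r - 1) * ‖x‖ ^ (-((d : ℝ) + 2 * r - 2)) := by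
  have hxn : (0:ℝ) < ‖x‖ := by
    simpa [norm_pos_iff] using hx
  set a : ℝ := ‖x‖ ^ 2 / 2 with ha_def
  have ha : 0 < a := by positivity
  set s : ℝ := (d : ℝ) / 2 + r - 1 with hs_def
  have hs : 0 < s := by
    have h0 : (0:ℝ) ≤ (d:ℝ) / 2 := by positivity
    rw [hs_def]; linarith
  obtain ⟨hint, hval⟩ := aux_key ha hs
  set M : ℝ := (2 * Real.pi) ^ (-(d : ℝ) / 2) * K * C with hM_def
  have hgi : Integrable (fun ξ : ℝ => M * (ξ ^ (-(s + 1)) * Real.exp (-(a / ξ))))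
      (volume.restrict (Set.Ioi 0)) := hint.const_mul M
  have h2pi : (0:ℝ) ≤ 2 * Real.pi := by positivity
  have step1 : (∫ ξ in Set.Ioi (0:ℝ),
      (2 * Real.pi) ^ (-(d : ℝ) / 2) * ξ ^ (-(d : ℝ) / 2) *
        Real.exp (-‖x‖ ^ 2 / (2 * ξ)) * (K * ξ ^ (-r) * L ξ)) ≤
      ∫ ξ in Set.Ioi (0:ℝ), M * (ξ ^ (-(s + 1)) * Real.exp (-(a / ξ))) := by
    apply integral_mono_of_nonneg
    · rw [Filter.EventuallyLE, ae_restrict_iff' measurableSet_Ioi]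
      filter_upwards with ξ hξ
      have hξ0 : (0:ℝ) < ξ := hξ
      exact mul_nonneg
        (mul_nonneg (mul_nonneg (Real.rpow_nonneg h2pi _) (Real.rpow_nonneg hξ0.le _))
          (Real.exp_nonneg _))
        (mul_nonneg (mul_nonneg hK.le (Real.rpow_nonneg hξ0.le _)) (hL ξ hξ0).1)
    · exact hgi
    · rw [Filter.EventuallyLE, ae_restrict_iff' measurableSet_Ioi]
      filter_upwards with ξ hξ
      have hξ0 : (0:ℝ) < ξ := hξ
      have hexp : -‖x‖ ^ 2 / (2 * ξ) = -(a / ξ) := by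
        rw [ha_def]; ring
      have hpow : ξ ^ (-(s + 1)) = ξ ^ (-(d:ℝ) / 2) * ξ ^ (-r) := by
        rw [← Real.rpow_add hξ0, hs_def]
        norm_num
        ring_nf
      rw [hexp, hpow]
      have hP : 0 ≤ (2 * Real.pi) ^ (-(d : ℝ) / 2) * ξ ^ (-(d:ℝ) / 2) *
          Real.exp (-(a / ξ)) * K * ξ ^ (-r) :=
        mul_nonneg (mul_nonneg (mul_nonneg (mul_nonneg (Real.rpow_nonneg h2pi _)
          (Real.rpow_nonneg hξ0.le _)) (Real.exp_nonneg _)) hK.le) (Real.rpow_nonneg hξ0.le _)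
      calc (2 * Real.pi) ^ (-(d : ℝ) / 2) * ξ ^ (-(d:ℝ) / 2) * Real.exp (-(a / ξ)) *
            (K * ξ ^ (-r) * L ξ)
          = ((2 * Real.pi) ^ (-(d : ℝ) / 2) * ξ ^ (-(d:ℝ) / 2) * Real.exp (-(a / ξ)) * K *
            ξ ^ (-r)) * L ξ := by ring
        _ ≤ ((2 * Real.pi) ^ (-(d : ℝ) / 2) * ξ ^ (-(d:ℝ) / 2) * Real.exp (-(a / ξ)) * K *
            ξ ^ (-r)) * C := mul_le_mul_of_nonneg_left (hL ξ hξ0).2 hP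
        _ = M * (ξ ^ (-(d:ℝ) / 2) * ξ ^ (-r) * Real.exp (-(a / ξ))) := by
            rw [hM_def]; ring
        _ = M * (ξ ^ (-(d:ℝ) / 2) * ξ ^ (-r) * Real.exp (-(a / ξ))) := rfl
  have step2 : (∫ ξ in Set.Ioi (0:ℝ), M * (ξ ^ (-(s + 1)) * Real.exp (-(a / ξ))))
      = M * (a ^ (-s) * Real.Gamma s) := by
    rw [integral_const_mul, hval]
  -- final algebra
  have e1 : (2 * Real.pi) ^ (-(d : ℝ) / 2)
      = (2:ℝ) ^ (-(d : ℝ) / 2) * Real.pi ^ (-(d : ℝ) / 2) :=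
    Real.mul_rpow (by norm_num) Real.pi_pos.le
  have e2 : a ^ (-s) = 2 ^ s * ‖x‖ ^ (-((d : ℝ) + 2 * r - 2)) := by
    rw [ha_def, Real.div_rpow (by positivity) (by norm_num),
      Real.rpow_neg (by norm_num : (0:ℝ) ≤ 2), div_inv_eq_mul, mul_comm]
    congr 1
    rw [← Real.rpow_natCast ‖x‖ 2, ← Real.rpow_mul hxn.le]
    congr 1
    rw [hs_def]; push_cast; ring
  have e3 : (2:ℝ) ^ (-(d : ℝ) / 2) * 2 ^ s = 2 ^ (r - 1) := by
    rw [← Real.rpow_add (by norm_num : (0:ℝ) < 2)]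
    congr 1
    rw [hs_def]; ring
  calc (∫ ξ in Set.Ioi (0:ℝ),
        (2 * Real.pi) ^ (-(d : ℝ) / 2) * ξ ^ (-(d : ℝ) / 2) *
          Real.exp (-‖x‖ ^ 2 / (2 * ξ)) * (K * ξ ^ (-r) * L ξ))
      ≤ M * (a ^ (-s) * Real.Gamma s) := step2 ▸ step1
    _ = C * K * 2 ^ (r - 1) * Real.pi ^ (-(d : ℝ) / 2) *
        Real.Gamma s * ‖x‖ ^ (-((d : ℝ) + 2 * r - 2)) := by
        rw [hM_def, e1, e2]
        linear_combination (Real.pi ^ (-(d : ℝ) / 2) * K * C *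
          ‖x‖ ^ (-((d : ℝ) + 2 * r - 2)) * Real.Gamma s) * e3
    _ = _ := by rw [hs_def]
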